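/- Let 0 < σ₁ < σ₂, let g₁, g₂ be the densities of N(0, σ₁²) and N(0, σ₂²), and let t = √(ln(σ₂/σ₁) / (σ₂² − σ₁²)). Then the variational (L¹) distance between the two densities equals ∫_{−∞}^{∞} |g₁(x) − g₂(x)| dx = 2·erf(σ₂ t) − 2·erf(σ₁ t), where erf(x) = (2/√π) ∫₀ˣ exp(−u²) du is the error function. -/

import Mathlib

open Real MeasureTheory

/-- The error function `erf(x) = (2/√π) ∫₀ˣ exp(−u²) du`. -/
noncomputable def errorFunction (x : ℝ) : ℝ :=
  (2 / Real.sqrt π) * ∫ u in (0 : ℝ)..x, Real.exp (-(u ^ 2))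

lemma gauss_integrable (σ : ℝ) (hσ : 0 < σ) :
    Integrable (fun x : ℝ => (σ * Real.sqrt (2*π))⁻¹ * Real.exp (-(x^2)/(2*σ^2))) := by
  have hb : (0:ℝ) < (2*σ^2)⁻¹ := by positivity
  have := (integrable_exp_neg_mul_sq hb).const_mul (σ * Real.sqrt (2*π))⁻¹
  convert this using 2 with x
  ring_nf

lemma gauss_total (σ : ℝ) (hσ : 0 < σ) :
    ∫ x : ℝ, (σ * Real.sqrt (2*π))⁻¹ * Real.exp (-(x^2)/(2*σ^2)) = 1 := by
  have hb : (0:ℝ) < (2*σ^2)⁻¹ := by positivity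
  have h1 : ∀ x : ℝ, -(x^2)/(2*σ^2) = -(2*σ^2)⁻¹ * x^2 := fun x => by ring
  simp_rw [h1]
  rw [integral_const_mul, integral_gaussian]
  have : π / (2*σ^2)⁻¹ = 2*π*σ^2 := by field_simp
  rw [this]
  have h2 : Real.sqrt (2*π*σ^2) = σ * Real.sqrt (2*π) := by
    rw [mul_comm, Real.sqrt_mul (by positivity), Real.sqrt_sq hσ.le]
  rw [h2, inv_mul_cancel₀ (by positivity)]

lemma gauss_interval (σ s : ℝ) (hσ : 0 < σ) :
    ∫ x in (-(Real.sqrt 2 * σ * s))..(Real.sqrt 2 * σ * s),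
      (σ * Real.sqrt (2*π))⁻¹ * Real.exp (-(x^2)/(2*σ^2)) = errorFunction s := by
  have hπ : 0 < π := pi_pos
  set c := Real.sqrt 2 * σ with hc
  have hcpos : 0 < c := by positivity
  have hc0 : c ≠ 0 := ne_of_gt hcpos
  have hcsq : c^2 = 2*σ^2 := by
    rw [hc, mul_pow, Real.sq_sqrt (by norm_num : (0:ℝ) ≤ 2)]
  have hpt : ∀ x : ℝ, (σ * Real.sqrt (2*π))⁻¹ * Real.exp (-(x^2)/(2*σ^2))
      = (fun u => (σ * Real.sqrt (2*π))⁻¹ * Real.exp (-(u^2))) (x / c) := by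
    intro x
    simp only
    congr 1
    rw [div_pow, hcsq]
    field_simp
  simp_rw [hpt]
  rw [show (∫ x in (-(c*s))..(c*s), (σ * Real.sqrt (2*π))⁻¹ * Real.exp (-((x/c)^2)))
      = c • ∫ x in (-(c*s)/c)..(c*s/c), (σ * Real.sqrt (2*π))⁻¹ * Real.exp (-(x^2)) from
    intervalIntegral.integral_comp_div (fun u => (σ * Real.sqrt (2*π))⁻¹ * Real.exp (-(u^2))) hc0]
  have h1 : -(c*s)/c = -s := by field_simp
  have h2 : c*s/c = s := by field_simp
  rw [h1, h2, intervalIntegral.integral_const_mul]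
  have hcont : Continuous fun x : ℝ => Real.exp (-(x^2)) := by continuity
  have heven : ∫ x in (-s)..s, Real.exp (-(x^2)) = 2 * ∫ x in (0:ℝ)..s, Real.exp (-(x^2)) := by
    have hneg : ∫ x in (-s)..(0:ℝ), Real.exp (-(x^2)) = ∫ x in (0:ℝ)..s, Real.exp (-(x^2)) := by
      have := intervalIntegral.integral_comp_neg (a := (0:ℝ)) (b := s)
        (fun x => Real.exp (-(x^2)))
      simp only [neg_sq, neg_zero] at this
      exact this.symm
    rw [← intervalIntegral.integral_add_adjacent_intervals
      (hcont.intervalIntegrable (-s) 0) (hcont.intervalIntegrable 0 s), hneg, two_mul]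
  rw [heven, errorFunction, smul_eq_mul]
  have hconst : c * ((σ * Real.sqrt (2*π))⁻¹ * 2) = 2 / Real.sqrt π := by
    rw [hc, Real.sqrt_mul (by norm_num : (0:ℝ) ≤ 2) π]
    have h2 : Real.sqrt 2 ≠ 0 := by positivity
    have hp : Real.sqrt π ≠ 0 := by positivity
    field_simp
  rw [← hconst]; ring

/-- For `0 < σ₁ < σ₂` and `t = √(ln(σ₂/σ₁)/(σ₂² − σ₁²))`, the L¹
(variational) distance between the densities of `N(0,σ₁²)` and `N(0,σ₂²)` equals
`2 erf(σ₂ t) − 2 erf(σ₁ t)`. -/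
theorem variational_distance_gaussians (σ₁ σ₂ : ℝ) (h1 : 0 < σ₁) (h12 : σ₁ < σ₂)
    (g₁ g₂ : ℝ → ℝ)
    (hg₁ : ∀ x, g₁ x = (σ₁ * Real.sqrt (2 * π))⁻¹ * Real.exp (-(x ^ 2) / (2 * σ₁ ^ 2)))
    (hg₂ : ∀ x, g₂ x = (σ₂ * Real.sqrt (2 * π))⁻¹ * Real.exp (-(x ^ 2) / (2 * σ₂ ^ 2)))
    (t : ℝ) (ht : t = Real.sqrt (Real.log (σ₂ / σ₁) / (σ₂ ^ 2 - σ₁ ^ 2))) :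
    ∫ x : ℝ, |g₁ x - g₂ x| =
      2 * errorFunction (σ₂ * t) - 2 * errorFunction (σ₁ * t) := by
  have hπ : 0 < π := pi_pos
  have h2 : 0 < σ₂ := h1.trans h12
  have hdiff : 0 < σ₂^2 - σ₁^2 := by nlinarith
  have hlog0 : 0 ≤ Real.log (σ₂ / σ₁) :=
    Real.log_nonneg ((one_le_div h1).2 h12.le)
  have ht0 : 0 ≤ t := ht ▸ Real.sqrt_nonneg _
  have htsq : t^2 = Real.log (σ₂ / σ₁) / (σ₂^2 - σ₁^2) := by
    rw [ht, Real.sq_sqrt (by positivity)]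
  set x₀ := Real.sqrt 2 * σ₁ * σ₂ * t with hx₀
  have hx₀0 : 0 ≤ x₀ := by positivity
  have hlogdiv : Real.log (σ₂ / σ₁) = Real.log σ₂ - Real.log σ₁ :=
    Real.log_div (ne_of_gt h2) (ne_of_gt h1)
  have hx₀sq : x₀^2 * (σ₂^2 - σ₁^2) = 2*σ₁^2*σ₂^2*(Real.log σ₂ - Real.log σ₁) := by
    have e : x₀^2 = 2*σ₁^2*σ₂^2*t^2 := by
      rw [hx₀, mul_pow, mul_pow, mul_pow, Real.sq_sqrt (by norm_num : (0:ℝ) ≤ 2)]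
    rw [e, htsq, hlogdiv]
    field_simp
  -- rewrite each density in "exp of log" form
  have hform : ∀ (σ : ℝ), 0 < σ → ∀ x : ℝ,
      (σ * Real.sqrt (2 * π))⁻¹ * Real.exp (-(x ^ 2) / (2 * σ ^ 2))
      = (Real.sqrt (2*π))⁻¹ * Real.exp (-Real.log σ + -(x^2) / (2*σ^2)) := by
    intro σ hσ x
    rw [Real.exp_add, Real.exp_neg, Real.exp_log hσ, mul_inv]
    ring
  have key : ∀ x : ℝ, (x^2 ≤ x₀^2 → g₂ x ≤ g₁ x) ∧ (x₀^2 ≤ x^2 → g₁ x ≤ g₂ x) := by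
    intro x
    rw [hg₁ x, hg₂ x, hform σ₁ h1 x, hform σ₂ h2 x]
    have hpos : (0:ℝ) < (Real.sqrt (2*π))⁻¹ := by positivity
    have hiff : ∀ a b : ℝ, (Real.sqrt (2*π))⁻¹ * Real.exp a ≤ (Real.sqrt (2*π))⁻¹ * Real.exp b
        ↔ a ≤ b := by
      intro a b
      rw [mul_le_mul_iff_right₀ hpos, Real.exp_le_exp]
    rw [hiff, hiff]
    have hcl : ∀ a b : ℝ, a ≤ b ↔ a * (2*σ₁^2*σ₂^2) ≤ b * (2*σ₁^2*σ₂^2) :=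
      fun a b => (mul_le_mul_iff_left₀ (by positivity)).symm
    constructor
    · intro hx
      rw [hcl]
      have e1 : (-Real.log σ₂ + -(x^2) / (2*σ₂^2)) * (2*σ₁^2*σ₂^2)
          = -(2*σ₁^2*σ₂^2)*Real.log σ₂ - x^2*σ₁^2 := by field_simp; ring
      have e2 : (-Real.log σ₁ + -(x^2) / (2*σ₁^2)) * (2*σ₁^2*σ₂^2)
          = -(2*σ₁^2*σ₂^2)*Real.log σ₁ - x^2*σ₂^2 := by field_simp; ring
      rw [e1, e2]
      nlinarith [hx₀sq]
    · intro hx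
      rw [hcl]
      have e1 : (-Real.log σ₁ + -(x^2) / (2*σ₁^2)) * (2*σ₁^2*σ₂^2)
          = -(2*σ₁^2*σ₂^2)*Real.log σ₁ - x^2*σ₂^2 := by field_simp; ring
      have e2 : (-Real.log σ₂ + -(x^2) / (2*σ₂^2)) * (2*σ₁^2*σ₂^2)
          = -(2*σ₁^2*σ₂^2)*Real.log σ₂ - x^2*σ₁^2 := by field_simp; ring
      rw [e1, e2]
      nlinarith [hx₀sq]
  -- pointwise abs identity
  have hg₁' : g₁ = fun x => (σ₁ * Real.sqrt (2 * π))⁻¹ * Real.exp (-(x ^ 2) / (2 * σ₁ ^ 2)) :=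
    funext hg₁
  have hg₂' : g₂ = fun x => (σ₂ * Real.sqrt (2 * π))⁻¹ * Real.exp (-(x ^ 2) / (2 * σ₂ ^ 2)) :=
    funext hg₂
  have hint1 : Integrable g₁ := by rw [hg₁']; exact gauss_integrable σ₁ h1
  have hint2 : Integrable g₂ := by rw [hg₂']; exact gauss_integrable σ₂ h2
  have hf : Integrable (fun x => g₁ x - g₂ x) := hint1.sub hint2
  have hind : Integrable (Set.indicator (Set.Icc (-x₀) x₀) (fun x => g₁ x - g₂ x)) :=
    hf.indicator measurableSet_Icc
  have habs : ∀ x : ℝ, |g₁ x - g₂ x|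
      = 2 * Set.indicator (Set.Icc (-x₀) x₀) (fun x => g₁ x - g₂ x) x - (g₁ x - g₂ x) := by
    intro x
    by_cases hx : x ∈ Set.Icc (-x₀) x₀
    · rw [Set.indicator_of_mem hx]
      have hle : g₂ x ≤ g₁ x := (key x).1 (sq_le_sq' hx.1 hx.2)
      rw [abs_of_nonneg (by linarith)]; ring
    · rw [Set.indicator_of_notMem hx]
      have h' : x₀ < |x| := by
        by_contra hcon
        exact hx (Set.mem_Icc.2 (abs_le.1 (not_lt.1 hcon)))
      have hx2 : x₀^2 ≤ x^2 := by
        have := sq_abs x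
        nlinarith [abs_nonneg x]
      have hle : g₁ x ≤ g₂ x := (key x).2 hx2
      rw [abs_of_nonpos (by linarith)]; ring
  calc ∫ x : ℝ, |g₁ x - g₂ x|
      = ∫ x : ℝ, (2 * Set.indicator (Set.Icc (-x₀) x₀) (fun x => g₁ x - g₂ x) x
          - (g₁ x - g₂ x)) := by simp_rw [habs]
    _ = 2 * (∫ x : ℝ, Set.indicator (Set.Icc (-x₀) x₀) (fun x => g₁ x - g₂ x) x)
          - ((∫ x : ℝ, g₁ x) - ∫ x : ℝ, g₂ x) := by
        rw [integral_sub (hind.const_mul 2) hf, integral_const_mul, integral_sub hint1 hint2]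
    _ = 2 * (∫ x in Set.Icc (-x₀) x₀, (g₁ x - g₂ x)) - (1 - 1) := by
        rw [integral_indicator measurableSet_Icc, hg₁', hg₂',
          gauss_total σ₁ h1, gauss_total σ₂ h2]
    _ = 2 * ((∫ x in (-x₀)..x₀, g₁ x) - ∫ x in (-x₀)..x₀, g₂ x) - 0 := by
        rw [MeasureTheory.integral_Icc_eq_integral_Ioc,
          ← intervalIntegral.integral_of_le (by linarith : -x₀ ≤ x₀),
          intervalIntegral.integral_sub hint1.intervalIntegrable
            hint2.intervalIntegrable]
        norm_num
    _ = 2 * errorFunction (σ₂ * t) - 2 * errorFunction (σ₁ * t) := by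
        have e₁ : ∫ x in (-x₀)..x₀, g₁ x = errorFunction (σ₂ * t) := by
          rw [hg₁', show x₀ = Real.sqrt 2 * σ₁ * (σ₂ * t) from by rw [hx₀]; ring]
          exact gauss_interval σ₁ (σ₂ * t) h1
        have e₂ : ∫ x in (-x₀)..x₀, g₂ x = errorFunction (σ₁ * t) := by
          rw [hg₂', show x₀ = Real.sqrt 2 * σ₂ * (σ₁ * t) from by rw [hx₀]; ring]
          exact gauss_interval σ₂ (σ₁ * t) h2
        rw [e₁, e₂]; ring
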